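/- Let m be a regular multisegment, m' a sub-multisegment of m, and Δ a segment occurring in m'. If Δ is a good left segment of m, then Δ is a good left segment of m'; if Δ is a good right segment of m, then Δ is a good right segment of m'. -/
import Mathlib


/-- A segment `[a;b]` is a pair of integers `a ≤ b`. -/
structure Segment where
  a : ℤ
  b : ℤ
  le : a ≤ b

namespace Segment

/-- `Δ ≺ Δ'` : the segment `Δ = [a;b]` precedes `Δ' = [c;d]`,
i.e. `a < c`, `c - 1 ≤ b` and `b < d`. -/
def prec (Δ Δ' : Segment) : Prop :=
  Δ.a < Δ'.a ∧ Δ'.a - 1 ≤ Δ.b ∧ Δ.b < Δ'.b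

/-- `←Δ = [a-1; b-1]`. -/
def shift (Δ : Segment) : Segment :=
  ⟨Δ.a - 1, Δ.b - 1, by have := Δ.le; omega⟩

instance (Δ Δ' : Segment) : Decidable (Δ.prec Δ') := by
  unfold prec; infer_instance

end Segment

/-- A multisegment (given as an indexed family of segments) is regular if the beginnings
of its segments are pairwise distinct and the ends of its segments are pairwise distinct. -/
def Regular {ι : Type*} (Δ : ι → Segment) : Prop :=
  (∀ i j : ι, (Δ i).a = (Δ j).a → i = j) ∧ (∀ i j : ι, (Δ i).b = (Δ j).b → i = j)

/-- The condition `LC(Δ₀, m)` : there is an injective function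
`f : X_{Δ₀,m} → Y_{Δ₀,m}` with `Δ_{f i} ≺ Δ_i` for all `i ∈ X_{Δ₀,m}`,
where `X_{Δ₀,m} = {i | Δ₀ ≺ Δ_i}` and `Y_{Δ₀,m} = {i | ←Δ₀ ≺ Δ_i}`. -/
def LC {ι : Type*} (Δ₀ : Segment) (Δ : ι → Segment) : Prop :=
  ∃ f : ι → ι, Set.InjOn f {i | Δ₀.prec (Δ i)} ∧
    ∀ i : ι, Δ₀.prec (Δ i) → Δ₀.shift.prec (Δ (f i)) ∧ (Δ (f i)).prec (Δ i)

/-- The condition `RC(Δ₀, m)` : there is an injective function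
`f : X̃_{Δ₀,m} → Ỹ_{Δ₀,m}` with `Δ_i ≺ Δ_{f i}` for all `i ∈ X̃_{Δ₀,m}`,
where `X̃_{Δ₀,m} = {i | Δ_i ≺ Δ₀}` and `Ỹ_{Δ₀,m} = {i | ←Δ_i ≺ Δ₀}`. -/
def RC {ι : Type*} (Δ₀ : Segment) (Δ : ι → Segment) : Prop :=
  ∃ f : ι → ι, Set.InjOn f {i | (Δ i).prec Δ₀} ∧
    ∀ i : ι, (Δ i).prec Δ₀ → (Δ (f i)).shift.prec Δ₀ ∧ (Δ i).prec (Δ (f i))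

/-- `Δ_{i₀}` is a good left segment of the multisegment `m` given by the family `Δ` :
`LC(Δ_{i₀}, m)`, `RC(Δ_{i₀}, m)` and `LC(Δ_{i₀}, m∖Δ_{i₀})` all hold. -/
def GoodLeft {ι : Type*} (Δ : ι → Segment) (i₀ : ι) : Prop :=
  LC (Δ i₀) Δ ∧ RC (Δ i₀) Δ ∧ LC (Δ i₀) (fun i : {i : ι // i ≠ i₀} => Δ i.val)

/-- `Δ_{i₀}` is a good right segment of the multisegment `m` given by the family `Δ` :
`LC(Δ_{i₀}, m)`, `RC(Δ_{i₀}, m)` and `RC(Δ_{i₀}, m∖Δ_{i₀})` all hold. -/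
def GoodRight {ι : Type*} (Δ : ι → Segment) (i₀ : ι) : Prop :=
  LC (Δ i₀) Δ ∧ RC (Δ i₀) Δ ∧ RC (Δ i₀) (fun i : {i : ι // i ≠ i₀} => Δ i.val)

/-- A good segment is one which is good left or good right. -/
def Good {ι : Type*} (Δ : ι → Segment) (i₀ : ι) : Prop :=
  GoodLeft Δ i₀ ∨ GoodRight Δ i₀


open Function

lemma key {ι : Type*} [Finite ι] (X Y S : Set ι) (r : ι → ι → Prop)
    (htrans : ∀ {a b c}, r a b → r b c → r a c)
    (hirr : ∀ a, ¬ r a a)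
    (f : ι → ι) (hinj : Set.InjOn f X)
    (hf : ∀ i ∈ X, f i ∈ Y ∧ r (f i) i)
    (hYS : ∀ j, j ∈ Y → j ∉ S → j ∈ X) :
    ∃ g : ι → ι, Set.InjOn g (X ∩ S) ∧ ∀ i ∈ X ∩ S, g i ∈ Y ∩ S ∧ r (g i) i := by
  classical
  have chain : ∀ i ∈ X, ∀ n : ℕ, (∀ m < n, f^[m+1] i ∉ S) →
      (∀ m ≤ n, f^[m] i ∈ X) ∧ (∀ m, 1 ≤ m → m ≤ n + 1 → f^[m] i ∈ Y) ∧
      (∀ m k, m < k → k ≤ n + 1 → r (f^[k] i) (f^[m] i)) := by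
    intro i hi n
    induction n with
    | zero =>
      intro _
      refine ⟨?_, ?_, ?_⟩
      · intro m hm; interval_cases m; simpa using hi
      · intro m h1 h2; interval_cases m; simpa using (hf i hi).1
      · intro m k h1 h2
        have hk : k = 1 := by omega
        have hm : m = 0 := by omega
        subst hk hm
        simpa using (hf i hi).2
    | succ n ih =>
      intro hS
      obtain ⟨hX, hY, hr⟩ := ih (fun m hm => hS m (by omega))
      have hlast : f^[n+1] i ∈ X :=
        hYS _ (hY (n+1) (by omega) (le_refl _)) (hS n (by omega))
      have hstep : f^[n+2] i ∈ Y ∧ r (f^[n+2] i) (f^[n+1] i) := by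
        have := hf _ hlast
        rwa [← Function.iterate_succ_apply' f (n+1) i] at this
      refine ⟨?_, ?_, ?_⟩
      · intro m hm
        rcases Nat.lt_or_ge m (n+1) with h | h
        · exact hX m (by omega)
        · have : m = n + 1 := by omega
          rw [this]; exact hlast
      · intro m h1 h2
        rcases Nat.lt_or_ge m (n+2) with h | h
        · exact hY m h1 (by omega)
        · have : m = n + 2 := by omega
          rw [this]; exact hstep.1
      · intro m k h1 h2
        rcases Nat.lt_or_ge k (n+2) with h | h
        · exact hr m k h1 (by omega)
        · have hk : k = n + 2 := by omega
          subst hk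
          rcases Nat.lt_or_ge m (n+1) with h' | h'
          · exact htrans hstep.2 (hr m (n+1) h' (le_refl _))
          · have : m = n + 1 := by omega
            rw [this]; exact hstep.2
  have term : ∀ i ∈ X ∩ S, ∃ n : ℕ, f^[n+1] i ∈ S := by
    intro i hi
    by_contra h
    push_neg at h
    have h2 := fun n => chain i hi.1 n (fun m _ => h m)
    have hrr : ∀ m k : ℕ, m < k → r (f^[k] i) (f^[m] i) := by
      intro m k hmk
      exact (h2 k).2.2 m k hmk (by omega)
    obtain ⟨a, b, hab, heq⟩ :=
      Finite.exists_ne_map_eq_of_infinite (fun n : ℕ => f^[n] i)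
    rcases hab.lt_or_gt with h' | h'
    · have := hrr a b h'
      rw [heq] at this
      exact hirr _ this
    · have := hrr b a h'
      rw [heq] at this
      exact hirr _ this
  refine ⟨fun i => if h : i ∈ X ∩ S then f^[Nat.find (term i h) + 1] i else i, ?_, ?_⟩
  · -- injectivity
    intro i hi i' hi' heq
    simp only [dif_pos hi, dif_pos hi'] at heq
    set n := Nat.find (term i hi) with hn
    set n' := Nat.find (term i' hi') with hn'
    -- symmetric core
    have core : ∀ (j : ι) (hj : j ∈ X ∩ S) (j' : ι) (hj' : j' ∈ X ∩ S),
        f^[Nat.find (term j hj) + 1] j = f^[Nat.find (term j' hj') + 1] j' →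
        Nat.find (term j hj) ≤ Nat.find (term j' hj') → j = j' := by
      intro j hj j' hj' heq hle
      set m := Nat.find (term j hj) with hm
      set m' := Nat.find (term j' hj') with hm'
      have hminj : ∀ k < m, f^[k+1] j ∉ S := fun k hk => Nat.find_min (term j hj) hk
      have hminj' : ∀ k < m', f^[k+1] j' ∉ S := fun k hk => Nat.find_min (term j' hj') hk
      obtain ⟨hXj, _, _⟩ := chain j hj.1 m hminj
      obtain ⟨hXj', _, _⟩ := chain j' hj'.1 m' hminj'
      have peel : ∀ s ≤ m + 1, f^[m+1-s] j = f^[m'+1-s] j' := by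
        intro s hs
        induction s with
        | zero => simpa using heq
        | succ s ihs =>
          have ih := ihs (by omega)
          have e1 : m + 1 - s = (m - s) + 1 := by omega
          have e2 : m' + 1 - s = (m' - s) + 1 := by omega
          rw [e1, e2, Function.iterate_succ_apply' f (m - s) j,
            Function.iterate_succ_apply' f (m' - s) j'] at ih
          have h1 : f^[m - s] j ∈ X := hXj _ (by omega)
          have h2 : f^[m' - s] j' ∈ X := hXj' _ (by omega)
          have := hinj h1 h2 ih
          have e3 : m + 1 - (s+1) = m - s := by omega
          have e4 : m' + 1 - (s+1) = m' - s := by omega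
          rw [e3, e4]; exact this
      have hfin := peel (m+1) (le_refl _)
      simp only [Nat.sub_self] at hfin
      -- hfin : f^[0] j = f^[m' - m] j'
      rw [Function.iterate_zero_apply] at hfin
      by_cases hmm : m = m'
      · have e0 : m' + 1 - (m + 1) = 0 := by omega
        rw [e0, Function.iterate_zero_apply] at hfin
        exact hfin
      · exfalso
        have hlt : m < m' := lt_of_le_of_ne hle hmm
        have h1 : m' + 1 - (m + 1) = (m' - m - 1) + 1 := by omega
        rw [h1] at hfin
        have : f^[(m' - m - 1)+1] j' ∉ S := hminj' _ (by omega)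
        rw [← hfin] at this
        exact this hj.2
    rcases le_total n n' with h | h
    · exact core i hi i' hi' heq h
    · exact (core i' hi' i hi heq.symm h).symm
  · intro i hi
    have hminS : ∀ k < Nat.find (term i hi), f^[k+1] i ∉ S :=
      fun k hk => Nat.find_min (term i hi) hk
    obtain ⟨hX, hY, hr⟩ := chain i hi.1 (Nat.find (term i hi)) hminS
    simp only [dif_pos hi]
    refine ⟨⟨hY _ (by omega) (le_refl _), Nat.find_spec (term i hi)⟩, ?_⟩
    have := hr 0 (Nat.find (term i hi) + 1) (by omega) (le_refl _)
    simpa using this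

lemma transfer {ι ι' : Type*} [Finite ι] (e : ι' ↪ ι) (X Y : Set ι) (r : ι → ι → Prop)
    (htrans : ∀ {a b c}, r a b → r b c → r a c)
    (hirr : ∀ a, ¬ r a a)
    (f : ι → ι) (hinj : Set.InjOn f X)
    (hf : ∀ i ∈ X, f i ∈ Y ∧ r (f i) i)
    (hYX : ∀ j ∈ Y, j ∉ Set.range e → j ∈ X) :
    ∃ f' : ι' → ι', Set.InjOn f' {i | e i ∈ X} ∧
      ∀ i, e i ∈ X → e (f' i) ∈ Y ∧ r (e (f' i)) (e i) := by
  classical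
  obtain ⟨g, ginj, hg⟩ := key X Y (Set.range e) r htrans hirr f hinj hf hYX
  have hgi : ∀ i, e i ∈ X → ∃ j, e j = g (e i) := by
    intro i hi
    obtain ⟨⟨_, j, hj⟩, _⟩ := hg (e i) ⟨hi, ⟨i, rfl⟩⟩
    exact ⟨j, hj⟩
  refine ⟨fun i => if h : e i ∈ X then Classical.choose (hgi i h) else i, ?_, ?_⟩
  · intro i hi i' hi' heq
    simp only [Set.mem_setOf_eq] at hi hi'
    simp only [dif_pos hi, dif_pos hi'] at heq
    have h1 := Classical.choose_spec (hgi i hi)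
    have h2 := Classical.choose_spec (hgi i' hi')
    have : g (e i) = g (e i') := by rw [← h1, ← h2, heq]
    exact e.injective (ginj ⟨hi, ⟨i, rfl⟩⟩ ⟨hi', ⟨i', rfl⟩⟩ this)
  · intro i hi
    simp only [dif_pos hi]
    have h1 := Classical.choose_spec (hgi i hi)
    rw [h1]
    obtain ⟨⟨hY, _⟩, hr⟩ := hg (e i) ⟨hi, ⟨i, rfl⟩⟩
    exact ⟨hY, hr⟩

lemma LCsub {ι ι' : Type*} [Finite ι] (e : ι' ↪ ι) (Δ : ι → Segment) (Δ₀ : Segment)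
    (hkey : ∀ j : ι, j ∉ Set.range e → Δ₀.shift.prec (Δ j) → Δ₀.prec (Δ j))
    (h : LC Δ₀ Δ) : LC Δ₀ (fun i => Δ (e i)) := by
  classical
  obtain ⟨f, finj, hfp⟩ := h
  obtain ⟨f', hinj', hf'⟩ := transfer e {i | Δ₀.prec (Δ i)} {i | Δ₀.shift.prec (Δ i)}
    (fun j i => (Δ j).a < (Δ i).a ∧ (Δ j).b < (Δ i).b)
    (fun hab hbc => ⟨hab.1.trans hbc.1, hab.2.trans hbc.2⟩)
    (fun a h => lt_irrefl _ h.1)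
    f finj
    (fun i hi => ⟨(hfp i hi).1, (hfp i hi).2.1, (hfp i hi).2.2.2⟩)
    (fun j hjY hjr => hkey j hjr hjY)
  refine ⟨f', hinj', ?_⟩
  intro i hi
  obtain ⟨hY, hr⟩ := hf' i hi
  refine ⟨hY, hr.1, ?_, hr.2⟩
  show (Δ (e i)).a - 1 ≤ (Δ (e (f' i))).b
  simp only [Set.mem_setOf_eq, Segment.prec, Segment.shift] at hY hi
  omega

lemma RCsub {ι ι' : Type*} [Finite ι] (e : ι' ↪ ι) (Δ : ι → Segment) (Δ₀ : Segment)
    (hkey : ∀ j : ι, j ∉ Set.range e → (Δ j).shift.prec Δ₀ → (Δ j).prec Δ₀)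
    (h : RC Δ₀ Δ) : RC Δ₀ (fun i => Δ (e i)) := by
  classical
  obtain ⟨f, finj, hfp⟩ := h
  obtain ⟨f', hinj', hf'⟩ := transfer e {i | (Δ i).prec Δ₀} {i | (Δ i).shift.prec Δ₀}
    (fun j i => (Δ i).a < (Δ j).a ∧ (Δ i).b < (Δ j).b)
    (fun hab hbc => ⟨hbc.1.trans hab.1, hbc.2.trans hab.2⟩)
    (fun a h => lt_irrefl _ h.1)
    f finj
    (fun i hi => ⟨(hfp i hi).1, (hfp i hi).2.1, (hfp i hi).2.2.2⟩)
    (fun j hjY hjr => hkey j hjr hjY)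
  refine ⟨f', hinj', ?_⟩
  intro i hi
  obtain ⟨hY, hr⟩ := hf' i hi
  refine ⟨hY, hr.1, ?_, hr.2⟩
  show (Δ (e (f' i))).a - 1 ≤ (Δ (e i)).b
  simp only [Set.mem_setOf_eq, Segment.prec, Segment.shift] at hY hi
  omega

/-- Lemma 3.5 (lem_good_sub): if `m'` is a sub-multisegment of a regular multisegment `m`
(given by an embedding `e` of index sets) and `Δ_{e i₀}` is a good left (resp. right)
segment of `m`, then it is a good left (resp. right) segment of `m'`. -/
theorem statement6 {N N' : ℕ} (Δ : Fin N → Segment) (hreg : Regular Δ)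
    (e : Fin N' ↪ Fin N) (i₀ : Fin N') :
    (GoodLeft Δ (e i₀) → GoodLeft (fun i => Δ (e i)) i₀) ∧
    (GoodRight Δ (e i₀) → GoodRight (fun i => Δ (e i)) i₀) := by
  classical
  set Δ₀ := Δ (e i₀) with hΔ₀
  have hna : ∀ j : Fin N, j ≠ e i₀ → (Δ j).a ≠ Δ₀.a := fun j hj h => hj (hreg.1 j (e i₀) h)
  have hnb : ∀ j : Fin N, j ≠ e i₀ → (Δ j).b ≠ Δ₀.b := fun j hj h => hj (hreg.2 j (e i₀) h)
  -- keys for the full family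
  have hkeyL : ∀ j : Fin N, j ∉ Set.range e → Δ₀.shift.prec (Δ j) → Δ₀.prec (Δ j) := by
    intro j hj hp
    have hne : j ≠ e i₀ := fun h => hj (h ▸ ⟨i₀, rfl⟩)
    have h1 := hna j hne
    have h2 := hnb j hne
    simp only [Segment.prec, Segment.shift] at hp ⊢
    omega
  have hkeyR : ∀ j : Fin N, j ∉ Set.range e → (Δ j).shift.prec Δ₀ → (Δ j).prec Δ₀ := by
    intro j hj hp
    have hne : j ≠ e i₀ := fun h => hj (h ▸ ⟨i₀, rfl⟩)
    have h1 := hna j hne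
    have h2 := hnb j hne
    simp only [Segment.prec, Segment.shift] at hp ⊢
    omega
  -- the embedding between punctured index sets
  let e' : {i : Fin N' // i ≠ i₀} ↪ {i : Fin N // i ≠ e i₀} :=
    ⟨fun i => ⟨e i.val, fun h => i.2 (e.injective h)⟩,
      fun i j h => Subtype.ext (e.injective (congrArg Subtype.val h))⟩
  have hkeyL' : ∀ j : {i : Fin N // i ≠ e i₀}, j ∉ Set.range e' →
      Δ₀.shift.prec (Δ j.val) → Δ₀.prec (Δ j.val) := by
    intro j _ hp
    have h1 := hna j.val j.2
    have h2 := hnb j.val j.2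
    simp only [Segment.prec, Segment.shift] at hp ⊢
    omega
  have hkeyR' : ∀ j : {i : Fin N // i ≠ e i₀}, j ∉ Set.range e' →
      (Δ j.val).shift.prec Δ₀ → (Δ j.val).prec Δ₀ := by
    intro j _ hp
    have h1 := hna j.val j.2
    have h2 := hnb j.val j.2
    simp only [Segment.prec, Segment.shift] at hp ⊢
    omega
  constructor
  · rintro ⟨h1, h2, h3⟩
    exact ⟨LCsub e Δ Δ₀ hkeyL h1, RCsub e Δ Δ₀ hkeyR h2,
      LCsub e' (fun i : {i : Fin N // i ≠ e i₀} => Δ i.val) Δ₀ hkeyL' h3⟩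
  · rintro ⟨h1, h2, h3⟩
    exact ⟨LCsub e Δ Δ₀ hkeyL h1, RCsub e Δ Δ₀ hkeyR h2,
      RCsub e' (fun i : {i : Fin N // i ≠ e i₀} => Δ i.val) Δ₀ hkeyR' h3⟩
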